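/- Suppose s ∈ ℝ is such that either β^{(s)} = b, or β^{(s)} < b and (k^{(s)})''(β^{(s)}) ≠ 0. Then the map u ↦ β^{(u)} is continuous at u = s; that is, limsup_{δ→0} β^{(s+δ)} ≤ β^{(s)} ≤ liminf_{δ→0} β^{(s+δ)}. -/

import Mathlib

open Set

/-- k (with derivatives k', k'') is a C² solution on [0,b] of the Cauchy problem
k'' + (2/σ²)(m·F(k') + ½σ²ε·F(k')² − ϱ·k + h(x)) = 0, k(0) = s, k'(0) = 0. -/
def IsCauchySolution (b σ ϱ m : ℝ) (h F : ℝ → ℝ) (ε s : ℝ) (k k' k'' : ℝ → ℝ) : Prop :=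
  (∀ x ∈ Icc (0:ℝ) b, HasDerivWithinAt k (k' x) (Icc (0:ℝ) b) x) ∧
  (∀ x ∈ Icc (0:ℝ) b, HasDerivWithinAt k' (k'' x) (Icc (0:ℝ) b) x) ∧
  ContinuousOn k'' (Icc (0:ℝ) b) ∧
  (∀ x ∈ Icc (0:ℝ) b,
    k'' x + (2 / σ ^ 2) * (m * F (k' x) + (1 / 2) * σ ^ 2 * ε * (F (k' x)) ^ 2
      - ϱ * k x + h x) = 0) ∧
  k 0 = s ∧ k' 0 = 0

open Topology Filter

lemma stmt11_gronwall (b σ ϱ r m ε : ℝ) (hσ : 0 < σ) (hϱ : 0 < ϱ) (hr : 0 < r)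
    (hε : 0 ≤ ε) (h F : ℝ → ℝ)
    (hF1 : ContDiff ℝ 1 F)
    (hFbd : ∀ z : ℝ, |F z| ≤ 2 * r) (hF'bd : ∀ z : ℝ, |deriv F z| ≤ 1)
    (k k' k'' : ℝ → ℝ → ℝ)
    (hsol : ∀ u : ℝ, IsCauchySolution b σ ϱ m h F ε u (k u) (k' u) (k'' u))
    (s : ℝ) :
    ∃ C > 0, ∀ u : ℝ, ∀ x ∈ Icc (0:ℝ) b, |k' u x - k' s x| ≤ C * |u - s| := by
  have hσ2 : (0:ℝ) < σ ^ 2 := by positivity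
  have hFlip : ∀ z w : ℝ, |F z - F w| ≤ |z - w| := by
    intro z w
    have := Convex.norm_image_sub_le_of_norm_deriv_le
      (f := F) (C := 1) (s := (univ : Set ℝ))
      (fun x _ => (hF1.differentiable one_ne_zero).differentiableAt)
      (fun x _ => by simpa using hF'bd x) convex_univ (mem_univ w) (mem_univ z)
    simpa using this
  set K0 : ℝ := (2 / σ ^ 2) * (|m| + 2 * σ ^ 2 * ε * r + ϱ) with hK0
  have hK0nn : 0 ≤ K0 := by positivity
  set K : ℝ := max 1 K0 with hK
  have hK1 : (1:ℝ) ≤ K := le_max_left _ _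
  have hKpos : (0:ℝ) < K := lt_of_lt_of_le one_pos hK1
  refine ⟨Real.exp (K * b), Real.exp_pos _, ?_⟩
  intro u x hx
  obtain ⟨hku, hku', hku'', hkueq, hku0, hku'0⟩ := hsol u
  obtain ⟨hks, hks', hks'', hkseq, hks0, hks'0⟩ := hsol s
  set f : ℝ → ℝ × ℝ := fun x => (k u x - k s x, k' u x - k' s x) with hf
  set f' : ℝ → ℝ × ℝ := fun x => (k' u x - k' s x, k'' u x - k'' s x) with hf'
  have hfc : ContinuousOn f (Icc 0 b) := by
    apply ContinuousOn.prodMk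
    · exact (fun y hy => ((hku y hy).sub (hks y hy)).continuousWithinAt)
    · exact (fun y hy => ((hku' y hy).sub (hks' y hy)).continuousWithinAt)
  have hfd : ∀ y ∈ Ico (0:ℝ) b, HasDerivWithinAt f (f' y) (Ici y) y := by
    intro y hy
    have hy' : y ∈ Icc (0:ℝ) b := ⟨hy.1, hy.2.le⟩
    have h1 : HasDerivWithinAt f (f' y) (Icc 0 b) y :=
      ((hku y hy').sub (hks y hy')).prodMk ((hku' y hy').sub (hks' y hy'))
    exact (h1.mono (Icc_subset_Icc hy.1 le_rfl)).mono_of_mem_nhdsWithin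
      (Icc_mem_nhdsGE_of_mem ⟨le_rfl, hy.2⟩)
  have ha : ‖f 0‖ ≤ |u - s| := by
    simp [hf, hku0, hks0, hku'0, hks'0, Prod.norm_def, Real.norm_eq_abs, abs_nonneg]
  have bound : ∀ y ∈ Ico (0:ℝ) b, ‖f' y‖ ≤ K * ‖f y‖ + 0 := by
    intro y hy
    have hy' : y ∈ Icc (0:ℝ) b := ⟨hy.1, hy.2.le⟩
    rw [add_zero]
    have hnf : ‖f y‖ = max |k u y - k s y| |k' u y - k' s y| := by
      simp [hf, Prod.norm_def, Real.norm_eq_abs]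
    have hnf' : ‖f' y‖ = max |k' u y - k' s y| |k'' u y - k'' s y| := by
      simp [hf', Prod.norm_def, Real.norm_eq_abs]
    rw [hnf, hnf']
    have hM0 : 0 ≤ max |k u y - k s y| |k' u y - k' s y| :=
      le_max_of_le_left (abs_nonneg _)
    apply max_le
    · calc |k' u y - k' s y| ≤ max |k u y - k s y| |k' u y - k' s y| := le_max_right _ _
        _ = 1 * _ := (one_mul _).symm
        _ ≤ K * _ := by gcongr
    · have hequ := hkueq y hy'
      have heqs := hkseq y hy'
      have hdiff : k'' u y - k'' s y
          = -(2 / σ ^ 2) * (m * (F (k' u y) - F (k' s y))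
            + (1/2) * σ ^ 2 * ε * ((F (k' u y))^2 - (F (k' s y))^2)
            - ϱ * (k u y - k s y)) := by
        have e1 : k'' u y = -(2 / σ ^ 2 * (m * F (k' u y)
            + 1 / 2 * σ ^ 2 * ε * F (k' u y) ^ 2 - ϱ * k u y + h y)) := by linarith
        have e2 : k'' s y = -(2 / σ ^ 2 * (m * F (k' s y)
            + 1 / 2 * σ ^ 2 * ε * F (k' s y) ^ 2 - ϱ * k s y + h y)) := by linarith
        rw [e1, e2]; ring
      set M := max |k u y - k s y| |k' u y - k' s y| with hMdef
      have h1 : |F (k' u y) - F (k' s y)| ≤ M :=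
        le_trans (hFlip _ _) (le_max_right _ _)
      have h2 : |(F (k' u y))^2 - (F (k' s y))^2| ≤ 4 * r * M := by
        have he : (F (k' u y))^2 - (F (k' s y))^2
            = (F (k' u y) + F (k' s y)) * (F (k' u y) - F (k' s y)) := by ring
        rw [he, abs_mul]
        have hsum : |F (k' u y) + F (k' s y)| ≤ 4 * r := by
          calc |F (k' u y) + F (k' s y)| ≤ |F (k' u y)| + |F (k' s y)| := abs_add_le _ _
            _ ≤ 2*r + 2*r := add_le_add (hFbd _) (hFbd _)
            _ = 4 * r := by ring
        calc |F (k' u y) + F (k' s y)| * |F (k' u y) - F (k' s y)|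
            ≤ (4*r) * M := mul_le_mul hsum h1 (abs_nonneg _) (by positivity)
          _ = 4 * r * M := by ring
      have h3 : |k u y - k s y| ≤ M := le_max_left _ _
      have hMnn : 0 ≤ M := hM0
      calc |k'' u y - k'' s y|
          = (2 / σ ^ 2) * |m * (F (k' u y) - F (k' s y))
            + (1/2) * σ ^ 2 * ε * ((F (k' u y))^2 - (F (k' s y))^2)
            - ϱ * (k u y - k s y)| := by
            rw [hdiff, abs_mul, abs_neg, abs_of_pos (by positivity : (0:ℝ) < 2 / σ ^ 2)]
        _ ≤ (2 / σ ^ 2) * (|m| * M + (1/2) * σ ^ 2 * ε * (4 * r * M) + ϱ * M) := by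
            gcongr (2 / σ ^ 2) * ?_
            calc |m * (F (k' u y) - F (k' s y))
                + (1/2) * σ ^ 2 * ε * ((F (k' u y))^2 - (F (k' s y))^2)
                - ϱ * (k u y - k s y)|
                ≤ |m * (F (k' u y) - F (k' s y))|
                  + |(1/2) * σ ^ 2 * ε * ((F (k' u y))^2 - (F (k' s y))^2)|
                  + |ϱ * (k u y - k s y)| := by
                  have h1' := abs_add_le (m * (F (k' u y) - F (k' s y))
                    + (1/2) * σ ^ 2 * ε * ((F (k' u y))^2 - (F (k' s y))^2))
                    (-(ϱ * (k u y - k s y)))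
                  rw [abs_neg] at h1'
                  have h2' := abs_add_le (m * (F (k' u y) - F (k' s y)))
                    ((1/2) * σ ^ 2 * ε * ((F (k' u y))^2 - (F (k' s y))^2))
                  calc _ = |m * (F (k' u y) - F (k' s y))
                      + (1/2) * σ ^ 2 * ε * ((F (k' u y))^2 - (F (k' s y))^2)
                      + -(ϱ * (k u y - k s y))| := by ring_nf
                    _ ≤ _ := h1'
                    _ ≤ _ := by linarith
              _ ≤ |m| * M + (1/2) * σ ^ 2 * ε * (4 * r * M) + ϱ * M := by
                  rw [abs_mul m, abs_mul ((1/2) * σ ^ 2 * ε), abs_mul ϱ]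
                  have e3 : |(1/2) * σ ^ 2 * ε| = (1/2) * σ ^ 2 * ε := abs_of_nonneg (by positivity)
                  have e4 : |ϱ| = ϱ := abs_of_pos hϱ
                  rw [e3, e4]
                  gcongr <;> first | exact h1 | exact h2 | exact h3
        _ = K0 * M := by rw [hK0]; ring
        _ ≤ K * M := by gcongr; exact le_max_right _ _
  have hgb := norm_le_gronwallBound_of_norm_deriv_right_le hfc hfd ha bound x hx
  rw [gronwallBound_ε0] at hgb
  have hcomp : |k' u x - k' s x| ≤ ‖f x‖ := by
    rw [show ‖f x‖ = max |k u x - k s x| |k' u x - k' s x| by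
      simp [hf, Prod.norm_def, Real.norm_eq_abs]]
    exact le_max_right _ _
  calc |k' u x - k' s x| ≤ ‖f x‖ := hcomp
    _ ≤ |u - s| * Real.exp (K * (x - 0)) := hgb
    _ ≤ |u - s| * Real.exp (K * b) := by
        have hxb : x - 0 ≤ b := by simpa using hx.2
        gcongr <;> first | exact hKpos.le | exact hxb
    _ = Real.exp (K * b) * |u - s| := by ring

/-- Suppose s ∈ ℝ is such that either β^{(s)} = b, or β^{(s)} < b and
(k^{(s)})''(β^{(s)}) ≠ 0. Then the map u ↦ β^{(u)} is continuous at u = s, where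
β^{(u)} = min(inf{x ∈ (0,b] : (k^{(u)})'(x) ≥ r}, b) (convention inf ∅ = +∞). -/
theorem stmt11 (b σ ϱ r m ε : ℝ) (hb : 0 < b) (hσ : 0 < σ) (hϱ : 0 < ϱ) (hr : 0 < r)
    (hε : 0 ≤ ε) (h F : ℝ → ℝ)
    (hLip : ∃ K : NNReal, LipschitzOnWith K h (Icc (0:ℝ) b))
    (hF1 : ContDiff ℝ 1 F) (hFid : ∀ z : ℝ, |z| ≤ r → F z = z)
    (hFbd : ∀ z : ℝ, |F z| ≤ 2 * r) (hF'bd : ∀ z : ℝ, |deriv F z| ≤ 1)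
    (k k' k'' : ℝ → ℝ → ℝ)
    (hsol : ∀ u : ℝ, IsCauchySolution b σ ϱ m h F ε u (k u) (k' u) (k'' u))
    (β : ℝ → ℝ)
    (hβ : ∀ u : ℝ, β u = sInf (insert b {x : ℝ | x ∈ Ioc (0:ℝ) b ∧ r ≤ k' u x}))
    (s : ℝ)
    (hs : β s = b ∨ (β s < b ∧ k'' s (β s) ≠ 0)) :
    ContinuousAt β s := by
  obtain ⟨C, hC, hgr⟩ :=
    stmt11_gronwall b σ ϱ r m ε hσ hϱ hr hε h F hF1 hFbd hF'bd k k' k'' hsol s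
  obtain ⟨hks, hks', hks'', hkseq, hks0, hks'0⟩ := hsol s
  set S : ℝ → Set ℝ := fun u => {x : ℝ | x ∈ Ioc (0:ℝ) b ∧ r ≤ k' u x} with hSdef
  have hβS : ∀ u, β u = sInf (insert b (S u)) := hβ
  have hbdd : ∀ u, BddBelow (insert b (S u)) := by
    intro u
    refine ⟨0, ?_⟩
    rintro x (rfl | hx)
    · exact hb.le
    · exact hx.1.1.le
  have hβleb : ∀ u, β u ≤ b := fun u => (hβS u) ▸ csInf_le (hbdd u) (mem_insert _ _)
  have hβlemem : ∀ u, ∀ x ∈ S u, β u ≤ x := fun u x hx =>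
    (hβS u) ▸ csInf_le (hbdd u) (mem_insert_of_mem _ hx)
  have hβge : ∀ u c, c ≤ b → (∀ x ∈ S u, c ≤ x) → c ≤ β u := by
    intro u c hcb hcS
    rw [hβS u]
    refine le_csInf (insert_nonempty _ _) ?_
    rintro x (rfl | hx)
    · exact hcb
    · exact hcS x hx
  have hk'cont : ContinuousOn (k' s) (Icc 0 b) := fun y hy => (hks' y hy).continuousWithinAt
  -- k' s is below r strictly before β s
  have hlt : ∀ x, 0 ≤ x → x < β s → k' s x < r := by
    intro x hx0 hxβ
    rcases eq_or_lt_of_le hx0 with rfl | hx0'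
    · rw [hks'0]; exact hr
    · by_contra hge
      push_neg at hge
      have hxS : x ∈ S s := ⟨⟨hx0', hxβ.le.trans (hβleb s)⟩, hge⟩
      exact absurd (hβlemem s x hxS) (not_le.mpr hxβ)
  -- β s > 0, and r ≤ k' s (β s) when β s < b
  have hkey : 0 < β s ∧ (β s < b → r ≤ k' s (β s)) := by
    rcases eq_or_lt_of_le (hβleb s) with hsb | hsb
    · constructor
      · rw [hsb]; exact hb
      · intro hlt'; rw [hsb] at hlt'; exact absurd hlt' (lt_irrefl b)
    · have hSne : (S s).Nonempty := by
        by_contra hne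
        rw [not_nonempty_iff_eq_empty] at hne
        have : β s = b := by rw [hβS s, hne]; simp
        exact absurd this (ne_of_lt hsb)
      have hbddS : BddBelow (S s) := ⟨0, fun x hx => hx.1.1.le⟩
      set L := sInf (S s) with hL
      have hseq : ∀ n : ℕ, ∃ x ∈ S s, x < L + 1/(n+1) := fun n =>
        exists_lt_of_csInf_lt hSne (lt_add_of_pos_right _ (by positivity))
      choose xs hxsS hxslt using hseq
      have hxsge : ∀ n, L ≤ xs n := fun n => csInf_le hbddS (hxsS n)
      have hxt : Filter.Tendsto xs Filter.atTop (𝓝 L) := by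
        have h2 : Filter.Tendsto (fun n : ℕ => L + 1/(n+1:ℝ)) Filter.atTop (𝓝 (L + 0)) :=
          tendsto_const_nhds.add tendsto_one_div_add_atTop_nhds_zero_nat
        rw [add_zero] at h2
        exact tendsto_of_tendsto_of_tendsto_of_le_of_le tendsto_const_nhds h2 hxsge
          (fun n => (hxslt n).le)
      have hLmem : L ∈ Icc (0:ℝ) b :=
        ⟨le_csInf hSne (fun x hx => hx.1.1.le),
          le_trans (csInf_le hbddS (hxsS 0)) (hxsS 0).1.2⟩
      have hxmem : ∀ n, xs n ∈ Icc (0:ℝ) b := fun n => ⟨(hxsS n).1.1.le, (hxsS n).1.2⟩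
      have hxt' : Filter.Tendsto xs Filter.atTop (𝓝[Icc (0:ℝ) b] L) :=
        tendsto_nhdsWithin_of_tendsto_nhds_of_eventually_within _ hxt
          (Filter.Eventually.of_forall hxmem)
      have hk'L : r ≤ k' s L :=
        ge_of_tendsto ((hk'cont L hLmem).tendsto.comp hxt')
          (Filter.Eventually.of_forall (fun n => (hxsS n).2))
      have hβeq : β s = min b L := by rw [hβS s, csInf_insert hbddS hSne]
      have hLb : L < b := by
        by_contra hLB
        push_neg at hLB
        rw [hβeq, min_eq_left hLB] at hsb
        exact absurd hsb (lt_irrefl _)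
      have hβL : β s = L := by rw [hβeq, min_eq_right hLb.le]
      have hβpos : 0 < β s := by
        rcases eq_or_lt_of_le hLmem.1 with h0 | h0
        · exfalso
          have hk0 : r ≤ k' s 0 := by rw [h0]; exact hk'L
          rw [hks'0] at hk0
          linarith
        · rw [hβL]; exact h0
      exact ⟨hβpos, fun _ => hβL ▸ hk'L⟩
  obtain ⟨hβpos, hβr⟩ := hkey
  rw [Metric.continuousAt_iff]
  intro ε' hε'
  -- upper semicontinuity
  have hub : ∃ η > 0, ∀ u : ℝ, C * |u - s| ≤ η → β u < β s + ε' := by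
    rcases hs with hsb | ⟨hsb, hne⟩
    · exact ⟨1, one_pos, fun u _ => lt_of_le_of_lt (hβleb u) (by rw [hsb]; linarith)⟩
    · have hrβ := hβr hsb
      have hβmem : β s ∈ Icc (0:ℝ) b := ⟨hβpos.le, hβleb s⟩
      -- left slope analysis: k'' s (β s) ≥ 0
      have hd : HasDerivWithinAt (k' s) (k'' s (β s)) (Icc 0 (β s)) (β s) :=
        (hks' (β s) hβmem).mono (Icc_subset_Icc le_rfl (hβleb s))
      have hslopeL := hasDerivWithinAt_iff_tendsto_slope.mp hd
      rw [Icc_sdiff_right] at hslopeL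
      have hneL : (𝓝[Ico (0:ℝ) (β s)] (β s)).NeBot := by
        apply mem_closure_iff_nhdsWithin_neBot.mp
        rw [closure_Ico (ne_of_lt hβpos)]
        exact ⟨hβpos.le, le_rfl⟩
      have hk''nonneg : 0 ≤ k'' s (β s) := by
        refine ge_of_tendsto hslopeL (eventually_nhdsWithin_of_forall (fun y hy => ?_))
        have h1 : k' s y < r := hlt y hy.1 hy.2
        rw [slope_def_field]
        exact div_nonneg_iff.mpr (Or.inr ⟨by linarith, by linarith [hy.2]⟩)
      have hk''pos : 0 < k'' s (β s) := lt_of_le_of_ne hk''nonneg (Ne.symm hne)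
      -- right slope analysis: find a point just after β s where k' s > r
      have hd2 : HasDerivWithinAt (k' s) (k'' s (β s)) (Icc (β s) b) (β s) :=
        (hks' (β s) hβmem).mono (Icc_subset_Icc hβpos.le le_rfl)
      have hslopeR := hasDerivWithinAt_iff_tendsto_slope.mp hd2
      rw [Icc_diff_left] at hslopeR
      have hneR : (𝓝[Ioc (β s) b] (β s)).NeBot := by
        apply mem_closure_iff_nhdsWithin_neBot.mp
        rw [closure_Ioc (ne_of_lt hsb)]
        exact ⟨le_rfl, hsb.le⟩
      have hev1 : ∀ᶠ y in 𝓝[Ioc (β s) b] (β s), k'' s (β s)/2 < slope (k' s) (β s) y :=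
        hslopeR.eventually (eventually_gt_nhds (half_lt_self hk''pos))
      have hev2 : ∀ᶠ y in 𝓝[Ioc (β s) b] (β s), y < β s + ε' :=
        Filter.Eventually.filter_mono nhdsWithin_le_nhds (gt_mem_nhds (by linarith))
      obtain ⟨y, hy1, hy2, hy3⟩ := (hev1.and (hev2.and eventually_mem_nhdsWithin)).exists
      have hyβ : 0 < y - β s := sub_pos.mpr hy3.1
      have hky : r < k' s y := by
        rw [slope_def_field, lt_div_iff₀ hyβ] at hy1
        nlinarith
      refine ⟨k' s y - r, by linarith, fun u hu => ?_⟩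
      have h6 := hgr u y ⟨(hβpos.trans hy3.1).le, hy3.2⟩
      have h7 : r ≤ k' u y := by linarith [(abs_le.mp (h6.trans hu)).1]
      exact lt_of_le_of_lt (hβlemem u y ⟨⟨hβpos.trans hy3.1, hy3.2⟩, h7⟩) hy2
  -- lower semicontinuity
  have hlb : ∃ η > 0, ∀ u : ℝ, C * |u - s| ≤ η → β s - ε' < β u := by
    set c := max 0 (β s - ε'/2) with hc
    have hc0 : 0 ≤ c := le_max_left _ _
    have hcβ : c < β s := max_lt hβpos (by linarith)
    have hcb : c ≤ b := hcβ.le.trans (hβleb s)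
    obtain ⟨x0, hx0mem, hx0max⟩ := (isCompact_Icc : IsCompact (Icc (0:ℝ) c)).exists_isMaxOn
      (nonempty_Icc.mpr hc0) (hk'cont.mono (Icc_subset_Icc le_rfl hcb))
    have hx0lt : k' s x0 < r := hlt x0 hx0mem.1 (lt_of_le_of_lt hx0mem.2 hcβ)
    refine ⟨(r - k' s x0)/2, by linarith, fun u hu => ?_⟩
    have hcβu : c ≤ β u := by
      refine hβge u c hcb ?_
      intro x hx
      by_contra hxc
      push_neg at hxc
      have h8 : k' s x ≤ k' s x0 := hx0max ⟨hx.1.1.le, hxc.le⟩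
      have h9 := hgr u x ⟨hx.1.1.le, hx.1.2⟩
      have h10 := (abs_le.mp (h9.trans hu)).2
      have := hx.2
      linarith
    have := le_max_right 0 (β s - ε'/2)
    linarith
  obtain ⟨η1, hη1, hub'⟩ := hub
  obtain ⟨η2, hη2, hlb'⟩ := hlb
  refine ⟨min η1 η2 / C, by positivity, ?_⟩
  intro u hu
  rw [Real.dist_eq] at hu
  have hCu : C * |u - s| ≤ min η1 η2 := by
    rw [lt_div_iff₀ hC] at hu
    linarith [mul_comm C |u - s|]
  rw [Real.dist_eq, abs_sub_lt_iff]
  constructor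
  · linarith [hub' u (hCu.trans (min_le_left _ _))]
  · linarith [hlb' u (hCu.trans (min_le_right _ _))]
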